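/- arXiv:2107.03566 — 3 statements merged into one kernel-verified Lean document; each statement's English description precedes it below -/
import Mathlib

section
/- Let E be a nilpotent group of nilpotency class at most k acting on a set Y. Let x, y ∈ Y and u ∈ E with u·x = y. If the stabilizer subgroup Stab(x) = {g ∈ E : g·x = x} satisfies Stab(x) ⊆ Stab(y) and Stab(x) = u⁻¹ Stab(y) u, then Stab(x) = Stab(y). -/
open MulAction

/-- Stabilizer lemma in nilpotent groups: if `u • x = y`, `Stab(x) ⊆ Stab(y)` and
`Stab(x) = u⁻¹ Stab(y) u`, then `Stab(x) = Stab(y)`. -/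
theorem stmt_3 {E : Type*} [Group E] {Y : Type*} [MulAction E Y]
    (k : ℕ) (hnilp : Subgroup.lowerCentralSeries (⊤ : Subgroup E) k = ⊥)
    (x y : Y) (u : E) (hu : u • x = y)
    (hsub : stabilizer E x ≤ stabilizer E y)
    (hconj : ∀ g : E, g ∈ stabilizer E x ↔ u * g * u⁻¹ ∈ stabilizer E y) :
    stabilizer E x = stabilizer E y := by
  by_contra hne
  obtain ⟨β₀, hβy, hβx⟩ : ∃ β, β ∈ stabilizer E y ∧ β ∉ stabilizer E x := by
    by_contra h
    push_neg at h
    exact hne (le_antisymm hsub h)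
  have key : ∀ i : ℕ, ∃ β, β ∈ Subgroup.lowerCentralSeries (⊤ : Subgroup E) i ∧
      β ∈ stabilizer E y ∧ β ∉ stabilizer E x := by
    intro i
    induction i with
    | zero => exact ⟨β₀, by simp [Subgroup.lowerCentralSeries], hβy, hβx⟩
    | succ n ih =>
      obtain ⟨β, hL, hy, hx⟩ := ih
      have hg : u⁻¹ * β⁻¹ * u ∈ stabilizer E x := by
        rw [hconj]
        have : u * (u⁻¹ * β⁻¹ * u) * u⁻¹ = β⁻¹ := by group
        rw [this]
        exact inv_mem hy
      refine ⟨(u⁻¹ * β⁻¹ * u) * β, ?_, mul_mem (hsub hg) hy, ?_⟩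
      · have h2 : β⁻¹ * u⁻¹ * β * u ∈ Subgroup.lowerCentralSeries (⊤ : Subgroup E) (n + 1) := by
          rw [Subgroup.mem_lowerCentralSeries_succ_iff]
          exact Subgroup.subset_closure ⟨β⁻¹, inv_mem hL, u⁻¹, trivial, by group⟩
        have : (u⁻¹ * β⁻¹ * u) * β = (β⁻¹ * u⁻¹ * β * u)⁻¹ := by group
        rw [this]
        exact inv_mem h2
      · intro hmem
        apply hx
        have : β = (u⁻¹ * β⁻¹ * u)⁻¹ * ((u⁻¹ * β⁻¹ * u) * β) := by group
        rw [this]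
        exact mul_mem (inv_mem hg) hmem
  obtain ⟨β, hL, hy, hx⟩ := key k
  rw [hnilp] at hL
  exact hx (Subgroup.mem_bot.mp hL ▸ one_mem _)
end

section
/- Let (Y,T) be a minimal topological dynamical system on a compact metric space whose Ellis (enveloping) semigroup E(Y,T) is a group that is nilpotent (of some finite class k). Then (Y,T) is topologically coalescent: every continuous surjection Φ : Y → Y with Φ ∘ T = T ∘ Φ is a homeomorphism. -/
open Function Set

universe u

/-- In a nilpotent group, if conjugation by `g` maps a subgroup `H` into itself,
then conjugation by `g⁻¹` also maps `H` into itself (so `gHg⁻¹ = H`). -/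
lemma stmt_5_nilpotent_conj : ∀ (n : ℕ) (G : Type u) [Group G],
    Subgroup.upperCentralSeries G n = ⊤ →
    ∀ (H : Subgroup G) (g : G), (∀ h ∈ H, g * h * g⁻¹ ∈ H) →
      ∀ h ∈ H, g⁻¹ * h * g ∈ H := by
  intro n
  induction n with
  | zero =>
      intro G _ htop H g hconj h hh
      rw [upperCentralSeries_zero] at htop
      have hx : ∀ x : G, x = 1 := fun x => by
        have hmem : x ∈ (⊥ : Subgroup G) := htop ▸ Subgroup.mem_top x
        simpa [Subgroup.mem_bot] using hmem
      have hrw : g⁻¹ * h * g = h := by rw [hx g, hx h]; simp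
      rw [hrw]; exact hh
  | succ n ih =>
      intro G _ htop H g hconj h hh
      set π := QuotientGroup.mk' (Subgroup.center G) with hπ
      have hQtop : Subgroup.upperCentralSeries (G ⧸ Subgroup.center G) n = ⊤ := by
        have hcom := comap_upperCentralSeries_quotient_center (G := G) n
        rw [show n.succ = n + 1 from rfl, htop] at hcom
        have := congrArg (Subgroup.map π) hcom
        rwa [Subgroup.map_comap_eq_self_of_surjective
          (QuotientGroup.mk'_surjective _),
          Subgroup.map_top_of_surjective _ (QuotientGroup.mk'_surjective _)] at this
      have hconj' : ∀ h' ∈ H.map π, (π g) * h' * (π g)⁻¹ ∈ H.map π := by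
        rintro _ ⟨x, hx, rfl⟩
        exact ⟨g * x * g⁻¹, hconj x hx, by simp⟩
      have hmem : π (g⁻¹ * h * g) ∈ H.map π := by
        have := ih (G ⧸ Subgroup.center G) hQtop (H.map π) (π g) hconj'
          (π h) ⟨h, hh, rfl⟩
        simpa using this
      obtain ⟨h', hh', heq⟩ := hmem
      rw [QuotientGroup.mk'_eq_mk'] at heq
      obtain ⟨z, hz, hzeq⟩ := heq
      -- h' * z = g⁻¹ * h * g, z central
      have hzH : z ∈ H := by
        have hz1 : z = h'⁻¹ * (g⁻¹ * h * g) := by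
          rw [← hzeq]; group
        have hz2 : g * z * g⁻¹ = z := by
          have := (Subgroup.mem_center_iff.mp hz) g
          rw [this]; group
        have hz3 : z = (g * h'⁻¹ * g⁻¹) * h := by
          rw [← hz2, hz1]; group
        rw [hz3]
        exact H.mul_mem (hconj h'⁻¹ (H.inv_mem hh')) hh
      have : g⁻¹ * h * g = h' * z := hzeq.symm
      rw [this]
      exact H.mul_mem hh' hzH

/-- A minimal system whose Ellis (enveloping) semigroup is a nilpotent group is
topologically coalescent: every continuous equivariant surjection `Φ : Y → Y` is a
homeomorphism. The Ellis semigroup is the closure of `{Tⁿ : n ∈ ℤ}` in `Y → Y` with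
the product topology; the hypothesis says it coincides with (the image of) a nilpotent
group of bijections of `Y`. -/
theorem stmt_5 {Y : Type*} [MetricSpace Y] [CompactSpace Y]
    (T : Y ≃ₜ Y)
    (hmin : ∀ y : Y, Dense (Set.range fun n : ℤ => (T.toEquiv ^ n) y))
    (G : Subgroup (Equiv.Perm Y))
    (hG : (fun g : Equiv.Perm Y => ⇑g) '' (G : Set (Equiv.Perm Y)) =
      closure (Set.range fun n : ℤ => ⇑(T.toEquiv ^ n)))
    (hnilp : Group.IsNilpotent G)
    (Φ : Y → Y) (hΦc : Continuous Φ) (hΦs : Surjective Φ)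
    (hΦT : Φ ∘ T = T ∘ Φ) :
    ∃ h : Y ≃ₜ Y, ⇑h = Φ := by
  classical
  set S : Set (Y → Y) := Set.range fun n : ℤ => ⇑(T.toEquiv ^ n) with hS
  -- Φ commutes with T pointwise
  have hcommT : ∀ x : Y, Φ (T x) = T (Φ x) := fun x => congrFun hΦT x
  have hcommTsymm : ∀ x : Y, Φ (T.symm x) = T.symm (Φ x) := by
    intro x
    have h0 : Φ (T (T.symm x)) = T (Φ (T.symm x)) := hcommT _
    rw [T.apply_symm_apply] at h0
    have h2 := congrArg (⇑T.symm) h0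
    simpa using h2.symm
  -- Φ commutes with all powers of T
  have hcommPow : ∀ (n : ℤ) (x : Y), Φ ((T.toEquiv ^ n) x) = (T.toEquiv ^ n) (Φ x) := by
    intro n
    induction n using Int.induction_on with
    | zero => simp
    | succ k ihk =>
        intro x
        have h1 : T.toEquiv ^ ((k : ℤ) + 1) = T.toEquiv * T.toEquiv ^ (k : ℤ) := by
          rw [add_comm, zpow_one_add]
        simp only [h1, Equiv.Perm.mul_apply]
        rw [show (T.toEquiv : Y → Y) = ⇑T from rfl] at *
        rw [hcommT, ihk]
    | pred k ihk =>
        intro x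
        have h1 : T.toEquiv ^ (-(k : ℤ) - 1) = T.toEquiv⁻¹ * T.toEquiv ^ (-(k : ℤ)) := by
          rw [show -(k : ℤ) - 1 = (-1) + (-(k : ℤ)) by ring, zpow_add, zpow_neg_one]
        simp only [h1, Equiv.Perm.mul_apply]
        have hinv : (T.toEquiv⁻¹ : Equiv.Perm Y) = T.symm.toEquiv := rfl
        rw [hinv]
        rw [show (T.symm.toEquiv : Y → Y) = ⇑T.symm from rfl]
        rw [hcommTsymm, ihk]
  -- Φ commutes with every element of the closure of S
  have hcommE : ∀ f ∈ closure S, ∀ x : Y, Φ (f x) = f (Φ x) := by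
    have hsub : closure S ⊆ ⋂ x : Y, {f : Y → Y | Φ (f x) = f (Φ x)} := by
      apply closure_minimal
      · rintro _ ⟨n, rfl⟩
        simp only [Set.mem_iInter, Set.mem_setOf_eq]
        intro x
        exact hcommPow n x
      · exact isClosed_iInter fun x =>
          isClosed_eq (hΦc.comp (continuous_apply x)) (continuous_apply (Φ x))
    intro f hf x
    exact Set.mem_iInter.mp (hsub hf) x
  -- Every g ∈ G commutes with Φ
  have hcommG : ∀ g : G, ∀ x : Y, Φ ((g : Equiv.Perm Y) x) = (g : Equiv.Perm Y) (Φ x) := by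
    intro g x
    have hg : (⇑(g : Equiv.Perm Y) : Y → Y) ∈ closure S := by
      rw [← hG]; exact ⟨(g : Equiv.Perm Y), g.2, rfl⟩
    exact hcommE _ hg x
  -- Transitivity: for all y z, there is g ∈ G with g y = z
  have htrans : ∀ y z : Y, ∃ g : G, (g : Equiv.Perm Y) y = z := by
    intro y z
    have hKcomp : IsCompact ((fun f : Y → Y => f y) '' closure S) :=
      (isClosed_closure.isCompact).image (continuous_apply y)
    have hKclosed : IsClosed ((fun f : Y → Y => f y) '' closure S) := hKcomp.isClosed
    have hrange : (Set.range fun n : ℤ => (T.toEquiv ^ n) y) ⊆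
        (fun f : Y → Y => f y) '' closure S := by
      rintro _ ⟨n, rfl⟩
      exact ⟨⇑(T.toEquiv ^ n), subset_closure ⟨n, rfl⟩, rfl⟩
    have hz : z ∈ (fun f : Y → Y => f y) '' closure S := by
      have hd := (hmin y).closure_eq
      have : closure (Set.range fun n : ℤ => (T.toEquiv ^ n) y) ⊆
          (fun f : Y → Y => f y) '' closure S :=
        closure_minimal hrange hKclosed
      rw [hd] at this
      exact this (Set.mem_univ z)
    obtain ⟨f, hf, hfy⟩ := hz
    rw [← hG] at hf
    obtain ⟨g, hgG, rfl⟩ := hf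
    exact ⟨⟨g, hgG⟩, hfy⟩
  -- Injectivity of Φ
  have hinj : Injective Φ := by
    intro a b hab
    set c : Y := Φ a with hc
    -- stabilizer of a point as a subgroup of G
    let stab : Y → Subgroup G := fun x =>
      { carrier := {h : G | (h : Equiv.Perm Y) x = x}
        one_mem' := rfl
        mul_mem' := by
          intro p q hp hq
          simp only [Set.mem_setOf_eq] at *
          simp [Subgroup.coe_mul, Equiv.Perm.mul_apply, hq, hp]
        inv_mem' := by
          intro p hp
          simp only [Set.mem_setOf_eq] at *
          have := congrArg (⇑(p : Equiv.Perm Y)⁻¹) hp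
          simpa using this.symm }
    have hstab_mem : ∀ (x : Y) (h : G), h ∈ stab x ↔ (h : Equiv.Perm Y) x = x :=
      fun x h => Iff.rfl
    -- Stab(a) ≤ Stab(c) and Stab(b) ≤ Stab(c)
    have hstab_ac : ∀ h : G, h ∈ stab a → h ∈ stab c := by
      intro h hh
      have : Φ ((h : Equiv.Perm Y) a) = (h : Equiv.Perm Y) (Φ a) := hcommG h a
      rw [hh] at this
      exact ((hstab_mem c h).mpr (by rw [hc]; exact this.symm))
    -- pick q with q c = a
    obtain ⟨q, hq⟩ := htrans c a
    -- conjugation by q maps stab c into stab c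
    have hconj : ∀ h ∈ stab c, q * h * q⁻¹ ∈ stab c := by
      intro h hh
      apply hstab_ac
      rw [hstab_mem]
      have hq' : ((q : Equiv.Perm Y))⁻¹ a = c := by
        rw [← hq]; simp
      simp only [Subgroup.coe_mul, Equiv.Perm.mul_apply]
      rw [show ((q⁻¹ : G) : Equiv.Perm Y) = ((q : Equiv.Perm Y))⁻¹ from rfl, hq']
      rw [(hstab_mem c h).mp hh, hq]
    -- nilpotency gives the reverse inclusion
    obtain ⟨n, hn⟩ := hnilp.nilpotent'
    have hrev := stmt_5_nilpotent_conj n G hn (stab c) q hconj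
    -- g with g a = b lies in stab c
    obtain ⟨g, hg⟩ := htrans a b
    have hgc : g ∈ stab c := by
      rw [hstab_mem]
      have h1 : Φ ((g : Equiv.Perm Y) a) = (g : Equiv.Perm Y) (Φ a) := hcommG g a
      rw [hg, ← hc] at h1
      rw [← h1, ← hab]
    -- hence q⁻¹ g q ∈ stab c, which means g ∈ stab a
    have hmem := hrev g hgc
    have hga : (g : Equiv.Perm Y) a = a := by
      have h2 : ((q⁻¹ * g * q : G) : Equiv.Perm Y) c = c := (hstab_mem c _).mp hmem
      simp only [Subgroup.coe_mul, Equiv.Perm.mul_apply] at h2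
      rw [show ((q⁻¹ : G) : Equiv.Perm Y) = ((q : Equiv.Perm Y))⁻¹ from rfl] at h2
      rw [hq] at h2
      have := congrArg (⇑(q : Equiv.Perm Y)) h2
      simpa [hq] using this
    rw [← hg, hga]
  -- conclude: continuous bijection on compact Hausdorff is a homeomorphism
  let e : Y ≃ Y := Equiv.ofBijective Φ ⟨hinj, hΦs⟩
  have he : Continuous e := hΦc
  exact ⟨he.homeoOfEquivCompactToT2, rfl⟩
end

section
/- Let (Y,T) be a minimal compact metric dynamical system whose Ellis semigroup is a nilpotent group, and suppose additionally (Y,T) is uniquely ergodic with invariant measure ν. Suppose π : Y → Y is a Borel measurable map, defined ν-almost everywhere, with π ∘ T = T ∘ π a.e. and π_*ν = ν, and suppose there exists a continuous factor map π̂ : Y → Y with π = π̂ ν-a.e. Then π is invertible on a T-invariant Borel set of full ν-measure, i.e., π is a measure-theoretic isomorphism of (Y, ν, T) with itself. -/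
open Function Set MeasureTheory Filter

universe u

/-- In a nilpotent group, if conjugation by `x⁻¹` maps a subgroup `H` into itself,
then so does conjugation by `x`. -/
theorem nilpotent_conj_aux (n : ℕ) : ∀ {K : Type u} [Group K] [Group.IsNilpotent K],
    Group.nilpotencyClass K ≤ n → ∀ (H : Subgroup K) (x : K),
      (∀ h ∈ H, x⁻¹ * h * x ∈ H) → ∀ h ∈ H, x * h * x⁻¹ ∈ H := by
  induction n with
  | zero =>
    intro K _ _ hc H x hx h hh
    have hs : Subsingleton K :=
      nilpotencyClass_zero_iff_subsingleton.mp (Nat.le_zero.mp hc)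
    have : x * h * x⁻¹ = h := Subsingleton.elim _ _
    rwa [this]
  | succ n ih =>
    intro K _ _ hc H x hx h hh
    let Z := Subgroup.center K
    let φ := QuotientGroup.mk' Z
    have hcq : Group.nilpotencyClass (K ⧸ Subgroup.center K) ≤ n := by
      have h9 := nilpotencyClass_quotient_center (G := K)
      omega
    have hmap : ∀ h' ∈ H.map φ, (φ x)⁻¹ * h' * φ x ∈ H.map φ := by
      rintro _ ⟨a, ha, rfl⟩
      exact ⟨x⁻¹ * a * x, hx a ha, by simp [map_mul, map_inv]⟩
    have hq := ih hcq (H.map φ) (φ x) hmap (φ h) ⟨h, hh, rfl⟩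
    rw [← map_inv, ← map_mul, ← map_mul] at hq
    obtain ⟨b, hb, hbeq⟩ := hq
    have hz : b⁻¹ * (x * h * x⁻¹) ∈ Z := by
      have : (b : K ⧸ Z) = ((x * h * x⁻¹ : K) : K ⧸ Z) := hbeq
      exact (QuotientGroup.eq).mp this
    set z := b⁻¹ * (x * h * x⁻¹) with hzdef
    have hxhx : x * h * x⁻¹ = b * z := by rw [hzdef]; group
    have hbx : x⁻¹ * b * x ∈ H := hx b hb
    have hcz : x * z = z * x := (Subgroup.mem_center_iff.mp hz x)
    have key : h = (x⁻¹ * b * x) * z := by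
      have h3 : x⁻¹ * (b * z) * x = x⁻¹ * b * x * z := by
        simp only [mul_assoc]
        rw [← hcz]
      calc h = x⁻¹ * (x * h * x⁻¹) * x := by group
        _ = x⁻¹ * (b * z) * x := by rw [hxhx]
        _ = (x⁻¹ * b * x) * z := h3
    have hzH : z ∈ H := by
      have : z = (x⁻¹ * b * x)⁻¹ * h := by rw [key]; group
      rw [this]
      exact H.mul_mem (H.inv_mem hbx) hh
    rw [hxhx]
    exact H.mul_mem hb hzH

theorem perm_inv_apply_self {α : Type*} (f : Equiv.Perm α) (x : α) : f⁻¹ (f x) = x :=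
  f.symm_apply_apply x

theorem perm_apply_inv_self {α : Type*} (f : Equiv.Perm α) (x : α) : f (f⁻¹ x) = x :=
  f.apply_symm_apply x

/-- Measurable coalescence: for a minimal uniquely ergodic system whose Ellis semigroup is
a nilpotent group, a measurable a.e.-equivariant measure-preserving self-factor map `π`
which agrees a.e. with a continuous factor map `π̂` is invertible on a `T`-invariant Borel
set of full measure, i.e. is a measure-theoretic isomorphism of `(Y, ν, T)` with itself. -/
theorem stmt_6 {Y : Type*} [MetricSpace Y] [CompactSpace Y]
    [MeasurableSpace Y] [BorelSpace Y]
    (T : Y ≃ₜ Y)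
    (hmin : ∀ y : Y, Dense (Set.range fun n : ℤ => (T.toEquiv ^ n) y))
    (G : Subgroup (Equiv.Perm Y))
    (hG : (fun g : Equiv.Perm Y => ⇑g) '' (G : Set (Equiv.Perm Y)) =
      closure (Set.range fun n : ℤ => ⇑(T.toEquiv ^ n)))
    (hnilp : Group.IsNilpotent G)
    (ν : Measure Y) [IsProbabilityMeasure ν] (hinv : ν.map T = ν)
    (hue : ∀ ν' : Measure Y, IsProbabilityMeasure ν' → ν'.map T = ν' → ν' = ν)
    (π : Y → Y) (hπm : Measurable π)
    (hπT : ∀ᵐ y ∂ν, π (T y) = T (π y))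
    (hπν : ν.map π = ν)
    (πhat : Y → Y) (hπhatc : Continuous πhat) (hπhats : Surjective πhat)
    (hπhatT : πhat ∘ T = T ∘ πhat)
    (hae : ∀ᵐ y ∂ν, π y = πhat y) :
    ∃ Y₀ : Set Y, MeasurableSet Y₀ ∧ T ⁻¹' Y₀ = Y₀ ∧ ν Y₀ = 1 ∧
      Set.InjOn π Y₀ ∧ MeasurableSet (π '' Y₀) ∧ T ⁻¹' (π '' Y₀) = π '' Y₀ ∧
      ν (π '' Y₀) = 1 := by
  classical
  haveI := hnilp
  -- Y is nonempty
  have hne : Nonempty Y := by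
    by_contra h
    rw [not_nonempty_iff] at h
    have h1 : ν univ = 1 := measure_univ
    rw [Set.univ_eq_empty_iff.mpr h] at h1
    simp at h1
  obtain ⟨y₀⟩ := hne
  -- one-step lemmas for integer powers
  have hz1 : ∀ k : ℤ, ⇑(T.toEquiv ^ (k + 1)) = ⇑(T.toEquiv ^ k) ∘ ⇑T := by
    intro k; funext y; rw [zpow_add_one]; rfl
  have hz2 : ∀ k : ℤ, ⇑(T.toEquiv ^ (k - 1)) = ⇑(T.toEquiv ^ k) ∘ ⇑T.symm := by
    intro k; funext y; rw [zpow_sub_one]; rfl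
  have hz0 : ⇑(T.toEquiv ^ (0 : ℤ)) = id := by
    funext y; rw [zpow_zero]; rfl
  -- the Ellis semigroup
  set E : Set (Y → Y) := closure (Set.range fun n : ℤ => ⇑(T.toEquiv ^ n)) with hE
  have hmemE : ∀ g ∈ G, ⇑g ∈ E := by
    intro g hg
    rw [← hG]
    exact ⟨g, hg, rfl⟩
  -- πhat commutes with every power of T
  have h1 : ∀ y, πhat (T y) = T (πhat y) := fun y => congrFun hπhatT y
  have h2 : ∀ y, πhat (T.symm y) = T.symm (πhat y) := by
    intro y
    have h3 := h1 (T.symm y)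
    rw [Homeomorph.apply_symm_apply] at h3
    rw [h3, Homeomorph.symm_apply_apply]
  have hTz : ∀ (n : ℤ) (y : Y), πhat ((T.toEquiv ^ n) y) = (T.toEquiv ^ n) (πhat y) := by
    intro n
    induction n using Int.induction_on with
    | zero => intro y; rw [show ((T.toEquiv ^ (0:ℤ)) y) = y from congrFun hz0 y,
        show ((T.toEquiv ^ (0:ℤ)) (πhat y)) = πhat y from congrFun hz0 (πhat y)]
    | succ k ih =>
      intro y
      rw [congrFun (hz1 k) y, congrFun (hz1 k) (πhat y)]
      simp only [Function.comp_apply]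
      rw [ih (T y), h1 y]
    | pred k ih =>
      intro y
      rw [congrFun (hz2 (-k)) y, congrFun (hz2 (-k)) (πhat y)]
      simp only [Function.comp_apply]
      rw [ih (T.symm y), h2 y]
  -- πhat commutes with every element of E
  have hcom : ∀ p ∈ E, ∀ y : Y, πhat (p y) = p (πhat y) := by
    have hCclosed : IsClosed {p : Y → Y | ∀ y, πhat (p y) = p (πhat y)} := by
      have heq : {p : Y → Y | ∀ y, πhat (p y) = p (πhat y)}
          = ⋂ y, {p : Y → Y | πhat (p y) = p (πhat y)} := by
        ext p; simp [Set.mem_iInter]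
      rw [heq]
      exact isClosed_iInter fun y =>
        isClosed_eq (hπhatc.comp (continuous_apply y)) (continuous_apply (πhat y))
    intro p hp
    exact closure_minimal (by rintro _ ⟨n, rfl⟩ y; exact hTz n y) hCclosed hp
  -- evaluation at y₀ is onto
  have hEsurj : ∀ a : Y, ∃ g ∈ G, (g : Equiv.Perm Y) y₀ = a := by
    intro a
    have hKc : IsCompact ((fun p : Y → Y => p y₀) '' E) :=
      (isClosed_closure.isCompact).image (continuous_apply y₀)
    have hsub : Set.range (fun n : ℤ => (T.toEquiv ^ n) y₀)
        ⊆ (fun p : Y → Y => p y₀) '' E := by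
      rintro _ ⟨n, rfl⟩
      exact ⟨⇑(T.toEquiv ^ n), subset_closure ⟨n, rfl⟩, rfl⟩
    have huniv : (univ : Set Y) ⊆ (fun p : Y → Y => p y₀) '' E := by
      rw [← (hmin y₀).closure_eq]
      exact closure_minimal hsub hKc.isClosed
    obtain ⟨p, hpE, hpa⟩ := huniv (mem_univ a)
    rw [← hG] at hpE
    obtain ⟨g, hg, rfl⟩ := hpE
    exact ⟨g, hg, hpa⟩
  obtain ⟨gr, hgrG, hgr⟩ := hEsurj (πhat y₀)
  -- stabilizer of y₀ in G
  let Λ : Subgroup G :=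
    { carrier := {g : G | (g : Equiv.Perm Y) y₀ = y₀}
      one_mem' := by simp
      mul_mem' := by
        intro a b ha hb
        simp only [Set.mem_setOf_eq, Subgroup.coe_mul, Equiv.Perm.mul_apply] at *
        rw [hb, ha]
      inv_mem' := by
        intro a ha
        simp only [Set.mem_setOf_eq, Subgroup.coe_inv] at *
        rw [← ha, perm_inv_apply_self, ha] }
  have hΛmem : ∀ g : G, g ∈ Λ ↔ (g : Equiv.Perm Y) y₀ = y₀ := fun g => Iff.rfl
  set xR : G := ⟨gr, hgrG⟩ with hxR
  have hstab : ∀ h ∈ Λ, xR⁻¹ * h * xR ∈ Λ := by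
    intro h hh
    rw [hΛmem]
    simp only [Subgroup.coe_mul, Subgroup.coe_inv, Equiv.Perm.mul_apply]
    have hfix : (h : Equiv.Perm Y) (πhat y₀) = πhat y₀ := by
      rw [← hcom _ (hmemE _ h.2) y₀, (hΛmem h).mp hh]
    rw [hgr, hfix, ← hgr, perm_inv_apply_self]
  have hstab2 : ∀ h ∈ Λ, xR * h * xR⁻¹ ∈ Λ :=
    nilpotent_conj_aux (Group.nilpotencyClass G) le_rfl Λ xR hstab
  -- πhat is injective
  have hinj : Function.Injective πhat := by
    intro a b hab
    obtain ⟨ga, hgaG, hga⟩ := hEsurj a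
    obtain ⟨gb, hgbG, hgb⟩ := hEsurj b
    have ha' : πhat a = ga (gr y₀) := by
      rw [← hga, hcom _ (hmemE ga hgaG) y₀, hgr]
    have hb' : πhat b = gb (gr y₀) := by
      rw [← hgb, hcom _ (hmemE gb hgbG) y₀, hgr]
    have hab' : ga (gr y₀) = gb (gr y₀) := by rw [← ha', ← hb', hab]
    set xA : G := ⟨ga, hgaG⟩
    set xB : G := ⟨gb, hgbG⟩
    have h0 : xR⁻¹ * (xB⁻¹ * xA) * xR ∈ Λ := by
      rw [hΛmem]
      simp only [Subgroup.coe_mul, Subgroup.coe_inv, Equiv.Perm.mul_apply, Subgroup.coe_mk]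
      rw [hab', perm_inv_apply_self, perm_inv_apply_self]
    have h1' := hstab2 _ h0
    have h2' : xR * (xR⁻¹ * (xB⁻¹ * xA) * xR) * xR⁻¹ = xB⁻¹ * xA := by group
    rw [h2', hΛmem] at h1'
    simp only [Subgroup.coe_mul, Subgroup.coe_inv, Equiv.Perm.mul_apply, Subgroup.coe_mk] at h1'
    have : ga y₀ = gb y₀ := by
      have := congrArg (⇑gb) h1'
      rwa [perm_apply_inv_self] at this
    rw [← hga, ← hgb, this]
  -- πhat as a homeomorphism
  let e : Y ≃ₜ Y :=
    Continuous.homeoOfEquivCompactToT2 (f := Equiv.ofBijective πhat ⟨hinj, hπhats⟩) hπhatc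
  have hecoe : ∀ y, e y = πhat y := fun _ => rfl
  have hsymmT : ∀ y, e.symm (T y) = T (e.symm y) := by
    intro y
    apply hinj
    have c1 : πhat (e.symm (T y)) = T y := by
      rw [← hecoe (e.symm (T y))]; exact e.apply_symm_apply (T y)
    have c2 : πhat (T (e.symm y)) = T y := by
      rw [h1 (e.symm y), ← hecoe (e.symm y), e.apply_symm_apply]
    rw [c1, c2]
  -- the measure part
  set A : Set Y := {y | π y = πhat y} with hA
  have hAm : MeasurableSet A := by
    have hdiag : A = (fun y => (π y, πhat y)) ⁻¹' (Set.diagonal Y) := by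
      ext y
      simp [hA, Set.mem_diagonal_iff, eq_comm]
    rw [hdiag]
    exact (hπm.prodMk hπhatc.measurable) isClosed_diagonal.measurableSet
  have hAc : ν Aᶜ = 0 := by
    have := hae
    rw [MeasureTheory.ae_iff] at this
    convert this using 2; rfl
  have hcont : ∀ n : ℤ, Continuous ⇑(T.toEquiv ^ n) := by
    intro n
    induction n using Int.induction_on with
    | zero => rw [hz0]; exact continuous_id
    | succ k ih => rw [hz1 k]; exact ih.comp T.continuous
    | pred k ih => rw [hz2 (-k)]; exact ih.comp T.symm.continuous
  have hmpT : MeasurePreserving ⇑T ν ν := ⟨T.continuous.measurable, hinv⟩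
  have hmpTs : MeasurePreserving ⇑T.symm ν ν :=
    (MeasurePreserving.symm T.toMeasurableEquiv hmpT)
  have hmp : ∀ n : ℤ, MeasurePreserving ⇑(T.toEquiv ^ n) ν ν := by
    intro n
    induction n using Int.induction_on with
    | zero => rw [hz0]; exact MeasurePreserving.id ν
    | succ k ih => rw [hz1 k]; exact ih.comp hmpT
    | pred k ih => rw [hz2 (-k)]; exact ih.comp hmpTs
  set Y₀ : Set Y := ⋂ n : ℤ, ⇑(T.toEquiv ^ n) ⁻¹' A with hY₀
  have hY₀m : MeasurableSet Y₀ :=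
    MeasurableSet.iInter fun n => (hcont n).measurable hAm
  have hstep : ∀ (n : ℤ) (y : Y), (T.toEquiv ^ (n + 1)) y = (T.toEquiv ^ n) (T y) :=
    fun n y => congrFun (hz1 n) y
  have hTY₀ : T ⁻¹' Y₀ = Y₀ := by
    ext y
    simp only [hY₀, mem_preimage, mem_iInter]
    constructor
    · intro h n
      have h4 := h (n - 1)
      have h5 : (T.toEquiv ^ (n - 1 + 1)) y = (T.toEquiv ^ (n - 1)) (T y) := hstep (n - 1) y
      have h6 : n - 1 + 1 = n := by ring
      rw [h6] at h5
      rwa [← h5] at h4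
    · intro h n
      have h4 := h (n + 1)
      rwa [hstep n y] at h4
  have hY₀full : ν Y₀ = 1 := by
    rw [← prob_compl_eq_zero_iff hY₀m]
    rw [hY₀, Set.compl_iInter]
    refine measure_iUnion_null fun n => ?_
    rw [← Set.preimage_compl]
    rw [(hmp n).measure_preimage hAm.compl.nullMeasurableSet]
    exact hAc
  have hY₀A : Y₀ ⊆ A := by
    intro y hy
    have := mem_iInter.mp hy 0
    rwa [hz0] at this
  have hInjOn : Set.InjOn π Y₀ := by
    intro x hx y hy hxy
    apply hinj
    rw [← hY₀A hx, ← hY₀A hy, hxy]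
  have himg : π '' Y₀ = ⇑e.symm ⁻¹' Y₀ := by
    rw [Set.image_congr (fun x hx => hY₀A hx)]
    ext x
    constructor
    · rintro ⟨y, hy, rfl⟩
      have hy2 : e.symm (πhat y) = y := by
        have h7 := e.symm_apply_apply y
        rwa [hecoe y] at h7
      rw [mem_preimage, hy2]
      exact hy
    · intro hx
      refine ⟨e.symm x, hx, ?_⟩
      have h7 := e.apply_symm_apply x
      rwa [hecoe (e.symm x)] at h7
  have himgm : MeasurableSet (π '' Y₀) := by
    rw [himg]
    exact e.symm.continuous.measurable hY₀m
  have himgT : T ⁻¹' (π '' Y₀) = π '' Y₀ := by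
    rw [himg]
    ext y
    simp only [mem_preimage]
    rw [hsymmT y]
    constructor
    · intro h
      have h4 : e.symm y ∈ T ⁻¹' Y₀ := h
      rwa [hTY₀] at h4
    · intro h
      have h4 : e.symm y ∈ T ⁻¹' Y₀ := by rwa [hTY₀]
      exact h4
  have hνe : ν.map ⇑e = ν := by
    have h4 : ν.map π = ν.map πhat := Measure.map_congr hae
    have h5 : ⇑e = πhat := funext hecoe
    rw [h5, ← h4, hπν]
  have hmape : ν.map ⇑e.symm = ν := by
    have h4 : ν.map ⇑e.symm = (ν.map ⇑e).map ⇑e.symm := by rw [hνe]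
    rw [h4, Measure.map_map e.symm.continuous.measurable e.continuous.measurable]
    have h5 : ⇑e.symm ∘ ⇑e = id := funext fun y => e.symm_apply_apply y
    rw [h5, Measure.map_id]
  have himgfull : ν (π '' Y₀) = 1 := by
    rw [himg, ← Measure.map_apply e.symm.continuous.measurable hY₀m, hmape, hY₀full]
  exact ⟨Y₀, hY₀m, hTY₀, hY₀full, hInjOn, himgm, himgT, himgfull⟩
end
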